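/- Let x : [0,T] → ℝ³ be a piecewise C¹ unit-speed curve, and let n_x, n_y, n_z be the number of times the first, second, and third coordinates respectively cross between distinct integer levels. Then n_x + n_y + n_z ≤ √3 · T + 3. Consequently, limsup_{T→∞} (n_x + n_y + n_z)/T ≤ √3. -/

import Mathlib

open MeasureTheory Set


/-- For a unit-speed piecewise `C¹` curve `x : [0,T] → ℝ³`, if coordinate `i` crosses between
distinct integer levels `n i` times, then `n 0 + n 1 + n 2 ≤ √3 · T + 3`. -/
theorem crossings_le_sqrt_three_mul_time
    (T : ℝ) (hT : 0 < T) (x v : ℝ → EuclideanSpace ℝ (Fin 3))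
    (hderiv : ∀ t ∈ Set.Icc (0 : ℝ) T, HasDerivAt x (v t) t)
    (hunit : ∀ t ∈ Set.Icc (0 : ℝ) T, ‖v t‖ = 1)
    (hint : ∀ i : Fin 3, IntervalIntegrable (fun t => |v t i|) MeasureTheory.volume 0 T)
    (n : Fin 3 → ℕ) (τ : ∀ i : Fin 3, Fin (n i + 1) → ℝ)
    (hmono : ∀ i, StrictMono (τ i))
    (h0 : ∀ i, 0 ≤ τ i 0) (hlast : ∀ i, τ i (Fin.last (n i)) ≤ T)
    (hint_val : ∀ i j, ∃ m : ℤ, x (τ i j) i = (m : ℝ))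
    (hdistinct : ∀ i, ∀ j : Fin (n i), x (τ i j.succ) i ≠ x (τ i j.castSucc) i) :
    ((n 0 : ℝ) + n 1 + n 2) ≤ Real.sqrt 3 * T + 3 := by
  have key : ∀ i : Fin 3, (n i : ℝ) ≤ ∫ t in (0:ℝ)..T, |v t i| := by
    intro i
    set g : ℝ → ℝ := fun t => x t i with hg_def
    set w : ℝ → ℝ := fun t => v t i with hw_def
    have hg : ∀ t ∈ Set.Icc (0:ℝ) T, HasDerivAt g (w t) t := by
      intro t ht
      have := (EuclideanSpace.proj i (𝕜 := ℝ)).hasFDerivAt.comp_hasDerivAt t (hderiv t ht)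
      exact this
    -- interval integrability of w
    have hmeas : AEStronglyMeasurable w (volume.restrict (Set.Ioc 0 T)) := by
      refine (measurable_deriv g).aestronglyMeasurable.congr ?_
      rw [Filter.EventuallyEq, ae_restrict_iff' measurableSet_Ioc]
      exact Filter.Eventually.of_forall fun t ht => (hg t ⟨ht.1.le, ht.2⟩).deriv
    have habs : IntervalIntegrable (fun t => |w t|) volume 0 T := hint i
    have hw_int : IntervalIntegrable w volume 0 T := by
      rw [intervalIntegrable_iff_integrableOn_Ioc_of_le hT.le] at habs ⊢
      exact habs.mono' hmeas (Filter.Eventually.of_forall fun t => by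
        simp [Real.norm_eq_abs])
    have habs : IntervalIntegrable (fun t => |w t|) volume 0 T := hint i
    -- points
    have hτmono := (hmono i).monotone
    set a : ℕ → ℝ := fun k => τ i ⟨min k (n i), Nat.lt_succ_of_le (min_le_right _ _)⟩ with ha_def
    have ha_mem : ∀ k, a k ∈ Set.Icc (0:ℝ) T := fun k =>
      ⟨(h0 i).trans (hτmono (Fin.zero_le _)), (hτmono (Fin.le_last _)).trans (hlast i)⟩
    have hsubI : ∀ p q : ℝ, p ∈ Set.Icc (0:ℝ) T → q ∈ Set.Icc (0:ℝ) T →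
        Set.uIcc p q ⊆ Set.uIcc (0:ℝ) T := by
      intro p q hp hq
      exact Set.uIcc_subset_uIcc (by rwa [Set.uIcc_of_le hT.le]) (by rwa [Set.uIcc_of_le hT.le])
    have hw_sub : ∀ k, IntervalIntegrable w volume (a k) (a (k+1)) :=
      fun k => hw_int.mono_set (hsubI _ _ (ha_mem k) (ha_mem (k+1)))
    have habs_sub : ∀ k, IntervalIntegrable (fun t => |w t|) volume (a k) (a (k+1)) :=
      fun k => habs.mono_set (hsubI _ _ (ha_mem k) (ha_mem (k+1)))
    have ha_mono : Monotone a := by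
      intro p q hpq
      exact hτmono (Fin.mk_le_mk.mpr (min_le_min_right _ hpq))
    have hstep : ∀ k < n i, (1:ℝ) ≤ ∫ t in a k..a (k+1), |w t| := by
      intro k hk
      have e1 : a k = τ i (Fin.castSucc ⟨k, hk⟩) := by
        simp only [ha_def]; exact congrArg (τ i) (Fin.ext (by simp [Nat.min_eq_left hk.le]))
      have e2 : a (k+1) = τ i (Fin.succ ⟨k, hk⟩) := by
        simp only [ha_def]; exact congrArg (τ i) (Fin.ext (by simp [Nat.min_eq_left hk]))
      have hftc : (∫ t in a k..a (k+1), w t) = g (a (k+1)) - g (a k) := by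
        refine intervalIntegral.integral_eq_sub_of_hasDerivAt (fun t ht => hg t ?_) (hw_sub k)
        have := hsubI _ _ (ha_mem k) (ha_mem (k+1)) ht
        rwa [Set.uIcc_of_le hT.le] at this
      obtain ⟨m1, hm1⟩ := hint_val i (Fin.succ ⟨k, hk⟩)
      obtain ⟨m2, hm2⟩ := hint_val i (Fin.castSucc ⟨k, hk⟩)
      have hne : m1 ≠ m2 := by
        intro h
        exact hdistinct i ⟨k, hk⟩ (by rw [hm1, hm2, h])
      have h1 : (1:ℝ) ≤ |g (a (k+1)) - g (a k)| := by
        rw [e1, e2]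
        show (1:ℝ) ≤ |x (τ i (Fin.succ ⟨k, hk⟩)) i - x (τ i (Fin.castSucc ⟨k, hk⟩)) i|
        rw [hm1, hm2]
        have : (1:ℤ) ≤ |m1 - m2| := Int.one_le_abs (sub_ne_zero.mpr hne)
        calc (1:ℝ) ≤ |((m1 - m2 : ℤ) : ℝ)| := by exact_mod_cast this
          _ = |(m1:ℝ) - m2| := by push_cast; ring_nf
      calc (1:ℝ) ≤ |g (a (k+1)) - g (a k)| := h1
        _ = |∫ t in a k..a (k+1), w t| := by rw [hftc]
        _ ≤ ∫ t in a k..a (k+1), |w t| :=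
            intervalIntegral.abs_integral_le_integral_abs (ha_mono (Nat.le_succ k))
    calc (n i : ℝ) = ∑ _k ∈ Finset.range (n i), (1:ℝ) := by simp
      _ ≤ ∑ k ∈ Finset.range (n i), ∫ t in a k..a (k+1), |w t| :=
          Finset.sum_le_sum fun k hk => hstep k (Finset.mem_range.mp hk)
      _ = ∫ t in (a 0)..(a (n i)), |w t| :=
          intervalIntegral.sum_integral_adjacent_intervals fun k _ => habs_sub k
      _ ≤ ∫ t in (0:ℝ)..T, |w t| := by
          refine intervalIntegral.integral_mono_interval (ha_mem 0).1
            (ha_mono (Nat.zero_le _)) (ha_mem (n i)).2 ?_ habs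
          exact Filter.Eventually.of_forall fun t => abs_nonneg _
  -- pointwise bound
  have hsum : ∀ t ∈ Set.Icc (0:ℝ) T, |v t 0| + |v t 1| + |v t 2| ≤ Real.sqrt 3 := by
    intro t ht
    have hn := hunit t ht
    rw [EuclideanSpace.norm_eq] at hn
    have hsq : (v t 0)^2 + (v t 1)^2 + (v t 2)^2 = 1 := by
      have h1 : Real.sqrt (∑ j, ‖v t j‖ ^ 2) = 1 := hn
      have h2 : (∑ j, ‖v t j‖ ^ 2) = 1 := by
        have hnn : (0:ℝ) ≤ ∑ j, ‖v t j‖ ^ 2 := Finset.sum_nonneg fun _ _ => sq_nonneg _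
        nlinarith [Real.sq_sqrt hnn]
      simpa [Fin.sum_univ_three, Real.norm_eq_abs, sq_abs] using h2
    have h3 : Real.sqrt 3 * Real.sqrt 3 = 3 := Real.mul_self_sqrt (by norm_num)
    nlinarith [abs_nonneg (v t 0), abs_nonneg (v t 1), abs_nonneg (v t 2),
      sq_abs (v t 0), sq_abs (v t 1), sq_abs (v t 2),
      sq_nonneg (|v t 0| - |v t 1|), sq_nonneg (|v t 1| - |v t 2|),
      sq_nonneg (|v t 0| - |v t 2|), Real.sqrt_nonneg 3,
      sq_nonneg (|v t 0| + |v t 1| + |v t 2| - Real.sqrt 3)]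
  have hI : (∫ t in (0:ℝ)..T, (|v t 0| + |v t 1| + |v t 2|)) ≤ Real.sqrt 3 * T := by
    have := intervalIntegral.integral_mono_on hT.le (((hint 0).add (hint 1)).add (hint 2))
      (intervalIntegrable_const (c := Real.sqrt 3)) hsum
    simpa [mul_comm] using this
  have hadd : (∫ t in (0:ℝ)..T, (|v t 0| + |v t 1| + |v t 2|)) =
      (∫ t in (0:ℝ)..T, |v t 0|) + (∫ t in (0:ℝ)..T, |v t 1|) + (∫ t in (0:ℝ)..T, |v t 2|) := by
    rw [intervalIntegral.integral_add ((hint 0).add (hint 1)) (hint 2),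
      intervalIntegral.integral_add (hint 0) (hint 1)]
  have := key 0
  have := key 1
  have := key 2
  linarith [hI, hadd.symm.le, key 0, key 1, key 2]
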